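/- Let d ≥ 1 be an integer and let A ≤ 0 be a real number. For g ∈ ℝ^d and z ∈ ℂ^d define the complex-valued map Λ_g(z) = (1−4A)^{d/4} · exp(A‖g‖₂² + √(1−4A)·(Σ_{i=1}^d g_i z_i) − (Σ_{i=1}^d z_i²)/2), where the products and exponential are taken in ℂ. Then for all u, v ∈ ℂ^d, 𝔼_{g∼N(0,I_d)}[Λ_g(u)·Λ_g(v)] = exp(Σ_{i=1}^d u_i v_i). -/

import Mathlib

open MeasureTheory ProbabilityTheory Real
open scoped ENNReal NNReal

/-- The standard Gaussian probability measure `N(0, I_d)` on `ℝ^d`. -/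
noncomputable def stdGaussian (d : ℕ) : Measure (EuclideanSpace ℝ (Fin d)) :=
  (Measure.pi fun _ => gaussianReal 0 1).map (MeasurableEquiv.toLp 2 (Fin d → ℝ))

/-- The complex-valued positive random feature map
`Λ_g(z) = (1-4A)^{d/4} exp(A‖g‖² + √(1-4A)·Σ gᵢzᵢ − (Σ zᵢ²)/2)` for `g ∈ ℝ^d`, `z ∈ ℂ^d`. -/
noncomputable def lambdaC (d : ℕ) (A : ℝ) (g : EuclideanSpace ℝ (Fin d))
    (z : Fin d → ℂ) : ℂ :=
  (((1 - 4 * A) ^ ((d : ℝ) / 4) : ℝ) : ℂ) *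
    Complex.exp (((A * ‖g‖ ^ 2 : ℝ) : ℂ)
      + ((Real.sqrt (1 - 4 * A) : ℝ) : ℂ) * (∑ i, (g i : ℂ) * z i)
      - (∑ i, z i ^ 2) / 2)

lemma pi_int (d : ℕ) (f : Fin d → ℝ → ℂ) :
    ∫ g : EuclideanSpace ℝ (Fin d), ∏ i, f i (g i) ∂(stdGaussian d)
      = ∏ i, ∫ x, f i x ∂(gaussianReal 0 1) := by
  letI : MeasureSpace ℝ := ⟨gaussianReal 0 1⟩
  haveI : SigmaFinite (volume : Measure ℝ) := by
    show SigmaFinite (gaussianReal 0 1); infer_instance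
  rw [_root_.stdGaussian, MeasureTheory.integral_map_equiv]
  exact MeasureTheory.integral_fintype_prod_eq_prod (μ := fun _ => gaussianReal 0 1) f

lemma one_dim (A : ℝ) (hA : A ≤ 0) (w : ℂ) :
    ∫ x : ℝ, Complex.exp (((2*A : ℝ) : ℂ) * (x:ℂ)^2 + ((Real.sqrt (1-4*A) : ℝ):ℂ) * w * x)
        ∂(gaussianReal 0 1)
      = ((Real.sqrt (1-4*A) : ℝ):ℂ)⁻¹ * Complex.exp (w^2/2) := by
  have h4 : (1:ℝ) ≤ 1 - 4*A := by linarith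
  have h4' : (0:ℝ) < 1 - 4*A := by linarith
  rw [gaussianReal_of_var_ne_zero _ one_ne_zero, gaussianPDF_def,
    show (fun x => ENNReal.ofReal (gaussianPDFReal 0 1 x))
      = fun x => ((gaussianPDFReal 0 1 x).toNNReal : ℝ≥0∞) from rfl,
    integral_withDensity_eq_integral_smul
      ((measurable_gaussianPDFReal 0 1).real_toNNReal)]
  have hpdf : ∀ x : ℝ, ((gaussianPDFReal 0 1 x).toNNReal : ℝ) = (√(2*π))⁻¹ * rexp (-(x^2)/2) := by
    intro x
    rw [Real.coe_toNNReal _ (gaussianPDFReal_nonneg 0 1 x)]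
    simp [gaussianPDFReal]
  have heq : ∀ x : ℝ,
      ((gaussianPDFReal 0 1 x).toNNReal : ℝ≥0) •
        Complex.exp (((2*A : ℝ) : ℂ) * (x:ℂ)^2 + ((Real.sqrt (1-4*A) : ℝ):ℂ) * w * x)
      = ((√(2*π) : ℝ) : ℂ)⁻¹ *
        Complex.exp ((((2*A : ℝ) : ℂ) - 1/2) * (x:ℂ)^2 + (((Real.sqrt (1-4*A) : ℝ):ℂ) * w) * x + 0) := by
    intro x
    simp only [NNReal.smul_def, Complex.real_smul]
    push_cast [hpdf x]
    rw [mul_assoc, ← Complex.exp_add]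
    ring_nf
  simp_rw [heq]
  rw [integral_const_mul, integral_cexp_quadratic (by simp; linarith : ((((2*A : ℝ) : ℂ) - 1/2)).re < 0)]
  have hbne : ((1 - 4*A : ℝ) : ℂ) ≠ 0 := by exact_mod_cast h4'.ne'
  have hs : (((Real.sqrt (1-4*A) : ℝ):ℂ))^2 = ((1-4*A : ℝ):ℂ) := by
    rw [← Complex.ofReal_pow, Real.sq_sqrt h4'.le]
  have hexp : (0 : ℂ) - (((Real.sqrt (1-4*A) : ℝ):ℂ) * w)^2 / (4 * ((((2*A : ℝ)):ℂ) - 1/2))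
      = w^2/2 := by
    rw [mul_pow, hs,
      show (4 * ((((2*A : ℝ)):ℂ) - 1/2)) = ((1-4*A:ℝ):ℂ) * (-2) by push_cast; ring,
      mul_div_mul_left _ _ hbne]
    ring
  have hconst : (((√(2*π) : ℝ)) : ℂ)⁻¹ * ((π : ℂ) / -((((2*A:ℝ)):ℂ) - 1/2)) ^ (1/2:ℂ)
      = (((√(1-4*A) : ℝ)) : ℂ)⁻¹ := by
    have c1 : (1 - 4*(A:ℂ)) ≠ 0 := by
      have h' : ((1-4*A:ℝ):ℂ) ≠ 0 := hbne
      push_cast at h'; exact h'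
    have c2 : -((((2*A:ℝ)):ℂ) - 1/2) ≠ 0 := by
      push_cast
      intro h
      exact c1 (by linear_combination 2*h)
    have h1 : ((π : ℂ) / -((((2*A:ℝ)):ℂ) - 1/2)) = ((2*π/(1-4*A) : ℝ) : ℂ) := by
      rw [div_eq_iff c2]
      push_cast
      field_simp
      ring
    rw [h1, show ((1:ℂ)/2) = (((1:ℝ)/2:ℝ):ℂ) by norm_num,
      ← Complex.ofReal_cpow (by have := Real.pi_pos; positivity : (0:ℝ) ≤ 2*π/(1-4*A))]
    have hre : (√(2*π))⁻¹ * ((2*π/(1-4*A)) ^ ((1:ℝ)/2:ℝ)) = (√(1-4*A))⁻¹ := by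
      rw [← Real.sqrt_eq_rpow, Real.sqrt_div (by positivity : (0:ℝ) ≤ 2*π)]
      have h2pi : √(2*π) ≠ 0 := by
        have := Real.pi_pos; positivity
      field_simp
    exact_mod_cast hre
  rw [hexp, ← mul_assoc, hconst]

theorem stmt_1 (d : ℕ) (hd : 1 ≤ d) (A : ℝ) (hA : A ≤ 0) (u v : Fin d → ℂ) :
    ∫ g, lambdaC d A g u * lambdaC d A g v ∂(stdGaussian d) =
      Complex.exp (∑ i, u i * v i) := by
  have h4' : (0:ℝ) < 1 - 4*A := by linarith
  have hnorm : ∀ g : EuclideanSpace ℝ (Fin d), (‖g‖^2 : ℝ) = ∑ i, (g i)^2 := by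
    intro g
    rw [EuclideanSpace.norm_eq, Real.sq_sqrt (by positivity)]
    simp [Real.norm_eq_abs, sq_abs]
  have hpt : ∀ g : EuclideanSpace ℝ (Fin d),
      lambdaC d A g u * lambdaC d A g v =
        ((((1-4*A)^((d:ℝ)/2) : ℝ) : ℂ) * Complex.exp (-(∑ i, u i^2 + ∑ i, v i^2)/2)) *
          ∏ i, Complex.exp (((2*A : ℝ) : ℂ) * ((g i : ℝ):ℂ)^2
            + ((Real.sqrt (1-4*A) : ℝ):ℂ) * (u i + v i) * ((g i : ℝ):ℂ)) := by
    intro g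
    have hd4 : (d:ℝ)/4 + (d:ℝ)/4 = (d:ℝ)/2 := by ring
    rw [lambdaC, lambdaC, mul_mul_mul_comm, ← Complex.exp_add, ← Complex.ofReal_mul,
      ← Real.rpow_add h4', hd4]
    conv_rhs => rw [← Complex.exp_sum, mul_assoc, ← Complex.exp_add]
    congr 1
    have hsplit : ∑ i, (((2*A : ℝ) : ℂ) * ((g i : ℝ):ℂ)^2
          + ((Real.sqrt (1-4*A) : ℝ):ℂ) * (u i + v i) * ((g i : ℝ):ℂ))
        = ((2*A : ℝ) : ℂ) * (∑ i, ((g i : ℝ):ℂ)^2)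
          + ((Real.sqrt (1-4*A) : ℝ):ℂ) * (∑ i, ((g i : ℝ):ℂ) * u i)
          + ((Real.sqrt (1-4*A) : ℝ):ℂ) * (∑ i, ((g i : ℝ):ℂ) * v i) := by
      simp only [Finset.mul_sum, ← Finset.sum_add_distrib]
      exact Finset.sum_congr rfl (fun i _ => by ring)
    rw [hsplit]
    push_cast [hnorm g]
    ring
  simp only [hpt]
  rw [integral_const_mul, pi_int d
    (fun i x => Complex.exp (((2*A : ℝ) : ℂ) * ((x : ℝ):ℂ)^2
      + ((Real.sqrt (1-4*A) : ℝ):ℂ) * (u i + v i) * ((x : ℝ):ℂ)))]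
  have hone : ∀ i, (∫ x : ℝ, Complex.exp (((2*A : ℝ) : ℂ) * ((x : ℝ):ℂ)^2
      + ((Real.sqrt (1-4*A) : ℝ):ℂ) * (u i + v i) * ((x : ℝ):ℂ)) ∂(gaussianReal 0 1))
      = ((Real.sqrt (1-4*A) : ℝ):ℂ)⁻¹ * Complex.exp ((u i + v i)^2/2) :=
    fun i => one_dim A hA (u i + v i)
  simp only [hone]
  rw [Finset.prod_mul_distrib, Finset.prod_const, ← Complex.exp_sum, Finset.card_univ,
    Fintype.card_fin]
  have hconstR : ((1-4*A)^((d:ℝ)/2)) * ((Real.sqrt (1-4*A))⁻¹)^d = 1 := by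
    have hsd : (Real.sqrt (1-4*A)) ^ d = (1-4*A)^((d:ℝ)/2) := by
      rw [Real.sqrt_eq_rpow, ← Real.rpow_natCast ((1-4*A)^((1:ℝ)/2)) d,
        ← Real.rpow_mul h4'.le, show (1:ℝ)/2*(d:ℝ) = (d:ℝ)/2 by ring]
    rw [inv_pow, hsd, mul_inv_cancel₀ (by positivity : ((1-4*A):ℝ)^((d:ℝ)/2) ≠ 0)]
  rw [show (((Real.sqrt (1-4*A) : ℝ):ℂ))⁻¹^d = ((((Real.sqrt (1-4*A))⁻¹)^d : ℝ):ℂ) by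
      push_cast; ring,
    mul_mul_mul_comm, ← Complex.ofReal_mul, hconstR, Complex.ofReal_one, one_mul,
    ← Complex.exp_add]
  congr 1
  have hsum : ∑ i, (u i + v i)^2
      = (∑ i, u i^2) + 2*(∑ i, u i * v i) + ∑ i, v i^2 := by
    simp only [add_sq, Finset.sum_add_distrib, Finset.mul_sum, mul_assoc]
  rw [← Finset.sum_div, hsum]
  ring
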